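/- arXiv:2605.02678 — 4 statements merged into one kernel-verified Lean document; each statement's English description precedes it below -/
import Mathlib

section
/- Let A_1,…,A_k be pairwise disjoint subsets of the vertex set of G with 1 ≤ k ≤ s, |A_1| = 2 and |A_2| = ⋯ = |A_k| = 1 (so a = k+1). Under the uniform probability measure on Φ_c, the probability that, for each j ∈ [k], all vertices of A_j receive one common color and these k colors are pairwise distinct, equals ((k−1)! / n^{(k+1)}) · [ (n−k)·e_k − (k+1)·e_{k+1} ], where e_k = E_k(c_1,…,c_s) is the degree-k elementary symmetric polynomial evaluated at the composition c. -/
open Finset MeasureTheory Filter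
open scoped Classical

/-- The finset of `c`-colorings of the vertex set `Fin n` with `s` colors:
maps `f : Fin n → Fin s` whose color class of color `i` has exactly `c i` elements. -/
noncomputable def colorings (n s : ℕ) (c : Fin s → ℕ) : Finset (Fin n → Fin s) :=
  Finset.univ.filter fun f => ∀ i, (Finset.univ.filter fun v => f v = i).card = c i

/-- Probability of an event under the uniform measure on the set of `c`-colorings. -/
noncomputable def colProb (n s : ℕ) (c : Fin s → ℕ) (E : (Fin n → Fin s) → Prop) : ℝ :=
  (((colorings n s c).filter fun f => E f).card : ℝ) / ((colorings n s c).card : ℝ)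

/-- Expectation of a real statistic under the uniform measure on `c`-colorings. -/
noncomputable def colExp (n s : ℕ) (c : Fin s → ℕ) (Y : (Fin n → Fin s) → ℝ) : ℝ :=
  (∑ f ∈ colorings n s c, Y f) / ((colorings n s c).card : ℝ)

/-- Variance of a real statistic under the uniform measure on `c`-colorings. -/
noncomputable def colVar (n s : ℕ) (c : Fin s → ℕ) (Y : (Fin n → Fin s) → ℝ) : ℝ :=
  colExp n s c fun f => (Y f - colExp n s c Y) ^ 2

/-- The number of edges of `G`. -/
noncomputable def edgeCount {n : ℕ} (G : SimpleGraph (Fin n)) : ℕ := G.edgeSet.ncard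

/-- `M_i(G)(f)`: the number of edges of `G` whose two endpoints both receive color `i`
under the coloring `f`. -/
noncomputable def monoEdges {n s : ℕ} (G : SimpleGraph (Fin n)) (i : Fin s)
    (f : Fin n → Fin s) : ℕ :=
  {e ∈ G.edgeSet | ∀ v ∈ e, f v = i}.ncard

/-- `M(G)(f) = ∑ i, M_i(G)(f)`: the total number of monochromatic edges. -/
noncomputable def monoTotal {n s : ℕ} (G : SimpleGraph (Fin n)) (f : Fin n → Fin s) : ℕ :=
  ∑ i, monoEdges G i f

/-- `L(G)(f) = m - M(G)(f)`: the number of bichromatic edges. -/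
noncomputable def biEdges {n s : ℕ} (G : SimpleGraph (Fin n)) (f : Fin n → Fin s) : ℝ :=
  (edgeCount G : ℝ) - (monoTotal G f : ℝ)

/-- `Σ₂(G)`: the sum of the squares of the degrees of `G`. -/
noncomputable def sigma2 {n : ℕ} (G : SimpleGraph (Fin n)) : ℕ :=
  ∑ v, ((G.neighborSet v).ncard) ^ 2

/-- `ζ(G) = √(Σ₂(G)) / m`. -/
noncomputable def zeta {n : ℕ} (G : SimpleGraph (Fin n)) : ℝ :=
  Real.sqrt (sigma2 G) / (edgeCount G : ℝ)

/-- The value `e_k = E_k(c_1,…,c_s)` of the degree-`k` elementary symmetric polynomial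
at the composition `c`. -/
def esymmVal (s : ℕ) (c : Fin s → ℕ) (k : ℕ) : ℕ :=
  ∑ A ∈ Finset.univ.powersetCard k, ∏ i ∈ A, c i


/-! ### Auxiliary lemmas -/

section EsymmAux

variable {α : Type*} [DecidableEq α] {R : Type*} [CommSemiring R]

/-- Elementary symmetric sum of degree `m` over a finset `U`. -/
def eS (x : α → R) (m : ℕ) (U : Finset α) : R := ∑ S ∈ U.powersetCard m, ∏ i ∈ S, x i

lemma eS_insert (x : α → R) (m : ℕ) {i : α} {U : Finset α} (h : i ∉ U) :
    eS x (m + 1) (insert i U) = eS x (m + 1) U + x i * eS x m U := by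
  unfold eS
  rw [powersetCard_succ_insert h, Finset.sum_union, Finset.sum_image, Finset.mul_sum]
  · congr 1
    refine Finset.sum_congr rfl fun S hS => ?_
    rw [Finset.prod_insert]
    intro hiS
    exact h ((Finset.mem_powersetCard.mp hS).1 hiS)
  · intro S hS T hT hST
    have hiS : i ∉ S := fun hiS => h ((Finset.mem_powersetCard.mp hS).1 hiS)
    have hiT : i ∉ T := fun hiT => h ((Finset.mem_powersetCard.mp hT).1 hiT)
    rw [← Finset.erase_insert hiS, ← Finset.erase_insert hiT, hST]
  · rw [Finset.disjoint_right]
    rintro S hS hS'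
    obtain ⟨T, hT, rfl⟩ := Finset.mem_image.mp hS
    exact h ((Finset.mem_powersetCard.mp hS').1 (Finset.mem_insert_self i T))

lemma eS_erase_sum (x : α → R) (m : ℕ) (U : Finset α) :
    ∑ i ∈ U, x i * eS x m (U.erase i) = (m + 1 : ℕ) * eS x (m + 1) U := by
  unfold eS
  have key : ∑ i ∈ U, ∑ S ∈ (U.erase i).powersetCard m, ∏ j ∈ insert i S, x j
      = ∑ T ∈ U.powersetCard (m + 1), ∑ i ∈ T, ∏ j ∈ T, x j := by
    rw [Finset.sum_sigma', Finset.sum_sigma']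
    refine Finset.sum_nbij' (fun p => ⟨insert p.1 p.2, p.1⟩) (fun q => ⟨q.2, q.1.erase q.2⟩)
      ?_ ?_ ?_ ?_ ?_
    · rintro ⟨i, S⟩ hp
      simp only [Finset.mem_sigma] at hp ⊢
      obtain ⟨hi, hS⟩ := hp
      rw [Finset.mem_powersetCard] at hS
      have hiS : i ∉ S := fun h => (Finset.mem_erase.mp (hS.1 h)).1 rfl
      refine ⟨Finset.mem_powersetCard.mpr ⟨?_, ?_⟩, Finset.mem_insert_self _ _⟩
      · exact Finset.insert_subset hi (hS.1.trans (Finset.erase_subset _ _))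
      · rw [Finset.card_insert_of_notMem hiS, hS.2]
    · rintro ⟨T, i⟩ hq
      simp only [Finset.mem_sigma] at hq ⊢
      obtain ⟨hT, hi⟩ := hq
      rw [Finset.mem_powersetCard] at hT
      refine ⟨hT.1 hi, Finset.mem_powersetCard.mpr ⟨?_, ?_⟩⟩
      · intro j hj
        rw [Finset.mem_erase] at hj ⊢
        exact ⟨hj.1, hT.1 hj.2⟩
      · rw [Finset.card_erase_of_mem hi, hT.2]
        rfl
    · rintro ⟨i, S⟩ hp
      simp only [Finset.mem_sigma] at hp
      obtain ⟨hi, hS⟩ := hp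
      rw [Finset.mem_powersetCard] at hS
      have hiS : i ∉ S := fun h => (Finset.mem_erase.mp (hS.1 h)).1 rfl
      simp [Finset.erase_insert hiS]
    · rintro ⟨T, i⟩ hq
      simp only [Finset.mem_sigma] at hq
      simp [Finset.insert_erase hq.2]
    · rintro ⟨i, S⟩ hp
      rfl
  calc ∑ i ∈ U, x i * ∑ S ∈ (U.erase i).powersetCard m, ∏ j ∈ S, x j
      = ∑ i ∈ U, ∑ S ∈ (U.erase i).powersetCard m, ∏ j ∈ insert i S, x j := by
        refine Finset.sum_congr rfl fun i hi => ?_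
        rw [Finset.mul_sum]
        refine Finset.sum_congr rfl fun S hS => ?_
        rw [Finset.prod_insert]
        exact fun h => (Finset.mem_erase.mp ((Finset.mem_powersetCard.mp hS).1 h)).1 rfl
    _ = ∑ T ∈ U.powersetCard (m + 1), ∑ i ∈ T, ∏ j ∈ T, x j := key
    _ = (m + 1 : ℕ) * ∑ T ∈ U.powersetCard (m + 1), ∏ j ∈ T, x j := by
        rw [Finset.mul_sum]
        refine Finset.sum_congr rfl fun T hT => ?_
        rw [Finset.sum_const, (Finset.mem_powersetCard.mp hT).2, nsmul_eq_mul]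

variable [Fintype α]

/-- Injective tuples with values in `U`. -/
noncomputable def injTup (m : ℕ) (U : Finset α) : Finset (Fin m → α) :=
  Finset.univ.filter fun g => Function.Injective g ∧ ∀ j, g j ∈ U

lemma injTup_succ_sum (m : ℕ) (U : Finset α) (F : (Fin (m + 1) → α) → R) :
    ∑ g ∈ injTup (m + 1) U, F g
      = ∑ i ∈ U, ∑ h ∈ injTup m (U.erase i), F (Fin.cons i h) := by
  rw [Finset.sum_sigma']
  refine (Finset.sum_nbij' (fun (q : Σ _ : α, Fin m → α) => Fin.cons q.1 q.2)
    (fun g => ⟨g 0, Fin.tail g⟩) ?_ ?_ ?_ ?_ ?_).symm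
  · rintro ⟨i, h⟩ hq
    simp only [Finset.mem_sigma, injTup, Finset.mem_filter, Finset.mem_univ, true_and] at hq ⊢
    obtain ⟨hi, hinj, hmem⟩ := hq
    refine ⟨Fin.cons_injective_iff.mpr ⟨?_, hinj⟩, ?_⟩
    · rintro ⟨j, hj⟩
      exact (Finset.mem_erase.mp (hmem j)).1 hj
    · intro j
      refine Fin.cases ?_ ?_ j
      · simpa using hi
      · intro j'
        simpa using (Finset.mem_erase.mp (hmem j')).2
  · intro g hg
    simp only [injTup, Finset.mem_filter, Finset.mem_univ, true_and, Finset.mem_sigma] at hg ⊢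
    obtain ⟨hinj, hmem⟩ := hg
    refine ⟨hmem 0, fun a b hab => Fin.succ_injective _ (hinj hab), fun j => ?_⟩
    exact Finset.mem_erase.mpr ⟨fun h => (Fin.succ_ne_zero j) (hinj h), hmem j.succ⟩
  · rintro ⟨i, h⟩ _
    simp [Fin.tail_cons]
  · intro g _
    simp [Fin.cons_self_tail]
  · rintro ⟨i, h⟩ _
    rfl

lemma injTup_prod_sum (x : α → R) (m : ℕ) (U : Finset α) :
    ∑ g ∈ injTup m U, ∏ j, x (g j) = (m.factorial : ℕ) * eS x m U := by
  induction m generalizing U with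
  | zero =>
      rw [eS]
      simp only [Finset.powersetCard_zero, Finset.sum_singleton, Finset.prod_empty]
      have : injTup 0 U = {(Fin.elim0 : Fin 0 → α)} := by
        ext g
        simp only [injTup, Finset.mem_filter, Finset.mem_univ, true_and, Finset.mem_singleton]
        constructor
        · intro _; funext j; exact j.elim0
        · rintro rfl
          exact ⟨fun a => a.elim0, fun j => j.elim0⟩
      simp [this]
  | succ m ih =>
      rw [injTup_succ_sum m U fun g => ∏ j, x (g j)]
      have : ∀ i ∈ U, (∑ h ∈ injTup m (U.erase i), ∏ j : Fin (m+1), x ((Fin.cons i h : Fin (m+1) → α) j))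
          = x i * ((m.factorial : ℕ) * eS x m (U.erase i)) := by
        intro i _
        rw [← ih (U.erase i), Finset.mul_sum]
        refine Finset.sum_congr rfl fun h _ => ?_
        rw [Fin.prod_univ_succ]
        simp
      rw [Finset.sum_congr rfl this]
      have h2 : ∑ i ∈ U, x i * ((m.factorial : ℕ) * eS x m (U.erase i))
          = (m.factorial : ℕ) * ∑ i ∈ U, x i * eS x m (U.erase i) := by
        rw [Finset.mul_sum]; exact Finset.sum_congr rfl fun i _ => by ring
      rw [h2, eS_erase_sum, Nat.factorial_succ]
      push_cast
      ring

lemma injTup_weighted (x w : α → R) (m : ℕ) :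
    ∑ g ∈ injTup (m + 1) (Finset.univ : Finset α), w (g 0) * ∏ j : Fin m, x (g j.succ)
      = (m.factorial : ℕ) * ∑ i, w i * eS x m (Finset.univ.erase i) := by
  rw [injTup_succ_sum m Finset.univ fun g => w (g 0) * ∏ j : Fin m, x (g j.succ)]
  rw [Finset.mul_sum]
  refine Finset.sum_congr rfl fun i _ => ?_
  have : (∑ h ∈ injTup m (Finset.univ.erase i),
      w ((Fin.cons i h : Fin (m+1) → α) 0) * ∏ j : Fin m, x ((Fin.cons i h : Fin (m+1) → α) j.succ))
      = w i * ∑ h ∈ injTup m (Finset.univ.erase i), ∏ j : Fin m, x (h j) := by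
    rw [Finset.mul_sum]
    refine Finset.sum_congr rfl fun h _ => ?_
    simp only [Fin.cons_zero, Fin.cons_succ]
  rw [this, injTup_prod_sum x m (Finset.univ.erase i)]
  ring

end EsymmAux

section CountAux

variable {n s : ℕ} {c : Fin s → ℕ}

lemma colorings_comp_equiv {f : Fin n → Fin s} (hf : f ∈ colorings n s c) (σ : Equiv.Perm (Fin n)) :
    f ∘ σ ∈ colorings n s c := by
  simp only [colorings, Finset.mem_filter, Finset.mem_univ, true_and] at hf ⊢
  intro i
  rw [← hf i]
  refine Finset.card_nbij' (fun v => σ v) (fun v => σ.symm v) ?_ ?_ ?_ ?_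
  · intro v hv
    simpa using (Finset.mem_filter.mp hv).2
  · intro v hv
    simp only [Finset.mem_filter, Finset.mem_univ, true_and, Function.comp_apply,
      Equiv.apply_symm_apply]
    simpa using (Finset.mem_filter.mp hv).2
  · intro v _; simp
  · intro v _; simp

/-- One-step symmetry lemma. -/
lemma step_count (D : Finset (Fin n)) (p : Fin n → Fin s) {v : Fin n} (hv : v ∉ D) (i : Fin s) :
    ((colorings n s c).filter fun f => (∀ w ∈ D, f w = p w) ∧ f v = i).card * (n - D.card)
      = ((colorings n s c).filter fun f => ∀ w ∈ D, f w = p w).card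
          * (c i - (D.filter fun w => p w = i).card) := by
  classical
  have hterm : ∀ w ∈ Finset.univ \ D,
      ((colorings n s c).filter fun f => (∀ u ∈ D, f u = p u) ∧ f w = i).card
        = ((colorings n s c).filter fun f => (∀ u ∈ D, f u = p u) ∧ f v = i).card := by
    intro w hw
    have hwD : w ∉ D := by simpa using hw
    refine Finset.card_nbij' (fun f => f ∘ Equiv.swap v w) (fun f => f ∘ Equiv.swap v w) ?_ ?_ ?_ ?_
    · intro f hf
      obtain ⟨hfc, hpres, hfw⟩ : f ∈ colorings n s c ∧ (∀ u ∈ D, f u = p u) ∧ f w = i := by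
        simpa [Finset.mem_filter, and_assoc] using hf
      refine Finset.mem_filter.mpr ⟨colorings_comp_equiv hfc _, ?_, ?_⟩
      · intro u hu
        have h1 : u ≠ v := fun h => hv (h ▸ hu)
        have h2 : u ≠ w := fun h => hwD (h ▸ hu)
        simp [Equiv.swap_apply_of_ne_of_ne h1 h2, hpres u hu]
      · simpa [Equiv.swap_apply_left] using hfw
    · intro f hf
      obtain ⟨hfc, hpres, hfv⟩ : f ∈ colorings n s c ∧ (∀ u ∈ D, f u = p u) ∧ f v = i := by
        simpa [Finset.mem_filter, and_assoc] using hf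
      refine Finset.mem_filter.mpr ⟨colorings_comp_equiv hfc _, ?_, ?_⟩
      · intro u hu
        have h1 : u ≠ v := fun h => hv (h ▸ hu)
        have h2 : u ≠ w := fun h => hwD (h ▸ hu)
        simp [Equiv.swap_apply_of_ne_of_ne h1 h2, hpres u hu]
      · simpa [Equiv.swap_apply_right] using hfv
    · intro f _
      funext u
      simp [Function.comp]
    · intro f _
      funext u
      simp [Function.comp]
  have hsum : ∑ w ∈ Finset.univ \ D,
      ((colorings n s c).filter fun f => (∀ u ∈ D, f u = p u) ∧ f w = i).card
      = ((colorings n s c).filter fun f => ∀ u ∈ D, f u = p u).card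
          * (c i - (D.filter fun w => p w = i).card) := by
    have hrw : ∀ w : Fin n, ((colorings n s c).filter fun f => (∀ u ∈ D, f u = p u) ∧ f w = i)
        = (((colorings n s c).filter fun f => ∀ u ∈ D, f u = p u)).filter fun f => f w = i := by
      intro w
      rw [Finset.filter_filter]
    calc ∑ w ∈ Finset.univ \ D,
          ((colorings n s c).filter fun f => (∀ u ∈ D, f u = p u) ∧ f w = i).card
        = ∑ w ∈ Finset.univ \ D, ∑ f ∈ (colorings n s c).filter fun f => ∀ u ∈ D, f u = p u,
            if f w = i then 1 else 0 := by
          refine Finset.sum_congr rfl fun w _ => ?_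
          rw [hrw w, Finset.card_filter]
      _ = ∑ f ∈ (colorings n s c).filter fun f => ∀ u ∈ D, f u = p u,
            ∑ w ∈ Finset.univ \ D, if f w = i then 1 else 0 := Finset.sum_comm
      _ = ∑ f ∈ (colorings n s c).filter fun f => ∀ u ∈ D, f u = p u,
            (c i - (D.filter fun w => p w = i).card) := by
          refine Finset.sum_congr rfl fun f hf => ?_
          obtain ⟨hfc, hpres⟩ := Finset.mem_filter.mp hf
          rw [← Finset.card_filter]
          have hfib : (Finset.univ.filter fun w => f w = i).card = c i := by
            simpa [colorings, Finset.mem_filter] using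
              (Finset.mem_filter.mp hfc).2 i
          have hDeq : D.filter (fun w => f w = i) = D.filter fun w => p w = i :=
            Finset.filter_congr fun w hw => by rw [hpres w hw]
          have hsd : (Finset.univ \ D).filter (fun w => f w = i)
              = (Finset.univ.filter fun w => f w = i) \ (D.filter fun w => f w = i) := by
            ext w
            simp only [Finset.mem_filter, Finset.mem_sdiff, Finset.mem_univ, true_and]
            tauto
          rw [hsd, Finset.card_sdiff_of_subset (Finset.filter_subset_filter _ (Finset.subset_univ D)),
            hfib, hDeq]
      _ = ((colorings n s c).filter fun f => ∀ u ∈ D, f u = p u).card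
            * (c i - (D.filter fun w => p w = i).card) := by
          rw [Finset.sum_const, smul_eq_mul]
  have hconst : ∑ w ∈ Finset.univ \ D,
      ((colorings n s c).filter fun f => (∀ u ∈ D, f u = p u) ∧ f w = i).card
      = ((colorings n s c).filter fun f => (∀ u ∈ D, f u = p u) ∧ f v = i).card
          * (n - D.card) := by
    rw [Finset.sum_congr rfl hterm, Finset.sum_const, smul_eq_mul, mul_comm]
    congr 1
    rw [Finset.sdiff_eq_inter_compl, Finset.univ_inter, Finset.card_compl, Fintype.card_fin]
  rw [← hconst, hsum]

/-- Master counting lemma. -/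
lemma master_count (D : Finset (Fin n)) (p : Fin n → Fin s) :
    ((colorings n s c).filter fun f => ∀ w ∈ D, f w = p w).card * n.descFactorial D.card
      = (colorings n s c).card
          * ∏ i, (c i).descFactorial ((D.filter fun w => p w = i).card) := by
  classical
  induction D using Finset.induction_on with
  | empty =>
      simp [Finset.filter_true_of_mem]
  | @insert v D hv ih =>
      have hcard : (insert v D).card = D.card + 1 := Finset.card_insert_of_notMem hv
      have hfilt : ((colorings n s c).filter fun f => ∀ w ∈ insert v D, f w = p w)
          = (colorings n s c).filter fun f => (∀ w ∈ D, f w = p w) ∧ f v = p v := by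
        refine Finset.filter_congr fun f _ => ?_
        simp only [Finset.forall_mem_insert]
        tauto
      have key := step_count (c := c) D p hv (p v)
      have ht : ∀ i, ((insert v D).filter fun w => p w = i)
          = if p v = i then insert v (D.filter fun w => p w = i)
            else D.filter fun w => p w = i := by
        intro i
        split_ifs with h
        · rw [Finset.filter_insert, if_pos h]
        · rw [Finset.filter_insert, if_neg h]
      have hprod : (∏ i, (c i).descFactorial (((insert v D).filter fun w => p w = i).card))
          = (c (p v) - (D.filter fun w => p w = p v).card)
            * ∏ i, (c i).descFactorial ((D.filter fun w => p w = i).card) := by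
        rw [← Finset.mul_prod_erase Finset.univ _ (Finset.mem_univ (p v)),
          ← Finset.mul_prod_erase Finset.univ
            (fun i => (c i).descFactorial ((D.filter fun w => p w = i).card))
            (Finset.mem_univ (p v))]
        have h1 : (((insert v D).filter fun w => p w = p v)).card
            = (D.filter fun w => p w = p v).card + 1 := by
          rw [ht (p v), if_pos rfl, Finset.card_insert_of_notMem]
          intro h
          exact hv (Finset.mem_filter.mp h).1
        have h2 : ∀ i ∈ Finset.univ.erase (p v),
            (c i).descFactorial (((insert v D).filter fun w => p w = i).card)
              = (c i).descFactorial ((D.filter fun w => p w = i).card) := by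
          intro i hi
          rw [ht i, if_neg (Finset.ne_of_mem_erase hi).symm]
        rw [Finset.prod_congr rfl h2, h1, Nat.descFactorial_succ]
        ring
      rw [hfilt, hcard, Nat.descFactorial_succ, hprod]
      calc ((colorings n s c).filter fun f => (∀ w ∈ D, f w = p w) ∧ f v = p v).card
            * ((n - D.card) * n.descFactorial D.card)
          = ((colorings n s c).filter fun f => (∀ w ∈ D, f w = p w) ∧ f v = p v).card
            * (n - D.card) * n.descFactorial D.card := by ring
        _ = ((colorings n s c).filter fun f => ∀ w ∈ D, f w = p w).card
            * (c (p v) - (D.filter fun w => p w = p v).card) * n.descFactorial D.card := by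
            rw [key]
        _ = (colorings n s c).card
            * ((c (p v) - (D.filter fun w => p w = p v).card)
              * ∏ i, (c i).descFactorial ((D.filter fun w => p w = i).card)) := by
            rw [mul_right_comm, ih]; ring

lemma colorings_nonempty (hsum : ∑ i, c i = n) : (colorings n s c).Nonempty := by
  classical
  have hcard : Fintype.card (Σ i : Fin s, Fin (c i)) = n := by
    simp [hsum]
  let e := Fintype.equivFinOfCardEq hcard
  refine ⟨fun v => (e.symm v).1, ?_⟩
  simp only [colorings, Finset.mem_filter, Finset.mem_univ, true_and]
  intro i
  have h1 : (Finset.univ.filter fun v : Fin n => (e.symm v).1 = i).card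
      = (Finset.univ.filter fun x : Σ j : Fin s, Fin (c j) => x.1 = i).card := by
    refine Finset.card_nbij' (fun v => e.symm v) (fun x => e x) ?_ ?_ ?_ ?_ <;>
      intro a ha <;> simp_all
  rw [h1, Finset.card_filter, ← Finset.univ_sigma_univ, Finset.sum_sigma]
  have h2 : ∀ j : Fin s, (∑ y : Fin (c j),
      if (⟨j, y⟩ : Σ j : Fin s, Fin (c j)).1 = i then 1 else 0) = if j = i then c j else 0 := by
    intro j
    split_ifs with h <;> simp [h]
  rw [Finset.sum_congr rfl fun j _ => h2 j]
  simp

/-- The per-class count. -/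
lemma per_g {k' : ℕ} {A : Fin (k' + 1) → Finset (Fin n)}
    (hdisj : ∀ j j' : Fin (k' + 1), j ≠ j' → Disjoint (A j) (A j'))
    (hA0 : (A 0).card = 2) (hA1 : ∀ j : Fin k', (A j.succ).card = 1)
    {g : Fin (k' + 1) → Fin s} (hg : Function.Injective g) :
    ((colorings n s c).filter fun f => ∀ j, ∀ v ∈ A j, f v = g j).card
        * n.descFactorial (k' + 2)
      = (colorings n s c).card
        * ((c (g 0)).descFactorial 2 * ∏ j : Fin k', c (g j.succ)) := by
  classical
  set D := Finset.univ.biUnion A with hD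
  set p : Fin n → Fin s := fun v => if h : ∃ j, v ∈ A j then g h.choose else g 0 with hp
  have hpA : ∀ j, ∀ v ∈ A j, p v = g j := by
    intro j v hv
    have hex : ∃ j', v ∈ A j' := ⟨j, hv⟩
    have hch : hex.choose = j := by
      by_contra hne
      exact Finset.disjoint_left.mp (hdisj _ _ hne) hex.choose_spec hv
    simp only [hp, dif_pos hex, hch]
  have hfilt : ((colorings n s c).filter fun f => ∀ j, ∀ v ∈ A j, f v = g j)
      = (colorings n s c).filter fun f => ∀ w ∈ D, f w = p w := by
    refine Finset.filter_congr fun f _ => ?_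
    constructor
    · intro h w hw
      obtain ⟨j, _, hj⟩ := Finset.mem_biUnion.mp hw
      rw [h j w hj, hpA j w hj]
    · intro h j v hv
      have hvD : v ∈ D := Finset.mem_biUnion.mpr ⟨j, Finset.mem_univ j, hv⟩
      rw [h v hvD, hpA j v hv]
  have hDcard : D.card = k' + 2 := by
    rw [hD, Finset.card_biUnion fun j _ j' _ hne => hdisj j j' hne, Fin.sum_univ_succ, hA0,
      Finset.sum_congr rfl fun j _ => hA1 j, Finset.sum_const, Finset.card_univ,
      Fintype.card_fin, smul_eq_mul]
    omega
  have hfg : ∀ j, D.filter (fun w => p w = g j) = A j := by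
    intro j
    ext w
    simp only [Finset.mem_filter]
    constructor
    · rintro ⟨hwD, hpw⟩
      obtain ⟨j', _, hj'⟩ := Finset.mem_biUnion.mp hwD
      rw [hpA j' w hj'] at hpw
      rwa [hg hpw] at hj'
    · intro hw
      exact ⟨Finset.mem_biUnion.mpr ⟨j, Finset.mem_univ j, hw⟩, hpA j w hw⟩
  have hprod : (∏ i, (c i).descFactorial ((D.filter fun w => p w = i).card))
      = (c (g 0)).descFactorial 2 * ∏ j : Fin k', c (g j.succ) := by
    have houtside : ∀ i ∈ Finset.univ, i ∉ Finset.univ.image g →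
        (c i).descFactorial ((D.filter fun w => p w = i).card) = 1 := by
      intro i _ hi
      have hempty : D.filter (fun w => p w = i) = ∅ := by
        refine Finset.filter_eq_empty_iff.mpr ?_
        intro w hw
        obtain ⟨j, _, hj⟩ := Finset.mem_biUnion.mp hw
        rw [hpA j w hj]
        intro hcontra
        exact hi (Finset.mem_image.mpr ⟨j, Finset.mem_univ j, hcontra⟩)
      rw [hempty]
      simp
    rw [← Finset.prod_subset (Finset.subset_univ (Finset.univ.image g)) houtside,
      Finset.prod_image fun a _ b _ hab => hg hab]
    have heq : ∀ j, (c (g j)).descFactorial ((D.filter fun w => p w = g j).card)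
        = (c (g j)).descFactorial ((A j).card) := fun j => by rw [hfg j]
    rw [Finset.prod_congr rfl fun j _ => heq j, Fin.prod_univ_succ, hA0]
    congr 1
    refine Finset.prod_congr rfl fun j _ => ?_
    rw [hA1 j, Nat.descFactorial_one]
  rw [hfilt, ← hDcard, master_count D p, hprod]

end CountAux

lemma esymmVal_cast (s : ℕ) (c : Fin s → ℕ) (m : ℕ) :
    ((esymmVal s c m : ℕ) : ℝ) = eS (fun i => (c i : ℝ)) m Finset.univ := by
  unfold esymmVal eS
  push_cast
  rfl

lemma sum_identity {s n : ℕ} (c : Fin s → ℕ) (hsum : ∑ i, c i = n) (hpos : ∀ i, 0 < c i)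
    (k' : ℕ) :
    ∑ i, ((c i).descFactorial 2 : ℝ) * eS (fun i => (c i : ℝ)) k' (Finset.univ.erase i)
      = ((n : ℝ) - ((k' : ℝ) + 1)) * eS (fun i => (c i : ℝ)) (k' + 1) Finset.univ
        - ((k' : ℝ) + 2) * eS (fun i => (c i : ℝ)) (k' + 2) Finset.univ := by
  classical
  set x : Fin s → ℝ := fun i => (c i : ℝ) with hx
  have hw : ∀ i, ((c i).descFactorial 2 : ℝ) = x i * (x i - 1) := by
    intro i
    have h1 : 1 ≤ c i := hpos i
    have hd : (c i).descFactorial 2 = (c i - 1) * c i := by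
      rw [Nat.descFactorial_succ, Nat.descFactorial_one]
    rw [hd]
    push_cast [h1]
    ring
  have hins : ∀ i : Fin s, x i * eS x k' (Finset.univ.erase i)
      = eS x (k' + 1) Finset.univ - eS x (k' + 1) (Finset.univ.erase i) := by
    intro i
    have h := eS_insert x k' (Finset.notMem_erase i Finset.univ)
    rw [Finset.insert_erase (Finset.mem_univ i)] at h
    rw [h]
    ring
  have h1 := eS_erase_sum x k' (Finset.univ : Finset (Fin s))
  have h2 := eS_erase_sum x (k' + 1) (Finset.univ : Finset (Fin s))
  have hxs : ∑ i, x i = (n : ℝ) := by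
    rw [hx, ← hsum]
    push_cast
    rfl
  have hexp : ∑ i, ((c i).descFactorial 2 : ℝ) * eS x k' (Finset.univ.erase i)
      = ∑ i, (x i * (eS x (k' + 1) Finset.univ - eS x (k' + 1) (Finset.univ.erase i))
          - x i * eS x k' (Finset.univ.erase i)) := by
    refine Finset.sum_congr rfl fun i _ => ?_
    rw [hw i, ← hins i]
    ring
  rw [hexp, Finset.sum_sub_distrib, h1]
  have hexp2 : ∑ i, x i * (eS x (k' + 1) Finset.univ - eS x (k' + 1) (Finset.univ.erase i))
      = (∑ i, x i) * eS x (k' + 1) Finset.univ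
        - ∑ i, x i * eS x (k' + 1) (Finset.univ.erase i) := by
    rw [Finset.sum_mul, ← Finset.sum_sub_distrib]
    exact Finset.sum_congr rfl fun i _ => by ring
  rw [hexp2, h2, hxs]
  push_cast
  ring

/-- For pairwise disjoint sets with `|A_1| = 2` and `|A_j| = 1` for `j ≠ 1`,
the probability that each `A j` is monochromatic with pairwise distinct colors equals
`((k-1)!/n^{(k+1)}) [(n-k) e_k - (k+1) e_{k+1}]`. -/
theorem stmt4 (n s k : ℕ) (hs2 : 2 ≤ s) (hsn : s ≤ n)
    (c : Fin s → ℕ) (hpos : ∀ i, 0 < c i) (hsum : ∑ i, c i = n)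
    (G : SimpleGraph (Fin n))
    (hk1 : 1 ≤ k) (hks : k ≤ s)
    (A : Fin k → Finset (Fin n))
    (hdisj : ∀ j j' : Fin k, j ≠ j' → Disjoint (A j) (A j'))
    (hA1 : (A ⟨0, hk1⟩).card = 2)
    (hArest : ∀ j : Fin k, j ≠ ⟨0, hk1⟩ → (A j).card = 1) :
    colProb n s c
        (fun f => ∃ g : Fin k → Fin s, Function.Injective g ∧ ∀ j, ∀ v ∈ A j, f v = g j)
      = (((k - 1).factorial : ℝ) / (n.descFactorial (k + 1) : ℝ)) *
          (((n : ℝ) - (k : ℝ)) * (esymmVal s c k : ℝ)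
            - ((k : ℝ) + 1) * (esymmVal s c (k + 1) : ℝ)) := by
  classical
  obtain ⟨k', rfl⟩ : ∃ k', k = k' + 1 := ⟨k - 1, (Nat.succ_pred_eq_of_pos hk1).symm⟩
  have hz : (⟨0, hk1⟩ : Fin (k' + 1)) = 0 := rfl
  rw [hz] at hA1
  have hArest' : ∀ j : Fin k', (A j.succ).card = 1 := fun j =>
    hArest j.succ (by rw [hz]; exact Fin.succ_ne_zero j)
  set x : Fin s → ℝ := fun i => (c i : ℝ) with hx
  set Inj := (Finset.univ : Finset (Fin (k' + 1) → Fin s)).filter Function.Injective with hInj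
  have hAne : ∀ j, (A j).Nonempty := by
    intro j
    rcases eq_or_ne j 0 with rfl | hne
    · exact Finset.card_pos.mp (by rw [hA1]; norm_num)
    · obtain ⟨j', rfl⟩ := Fin.eq_succ_of_ne_zero hne
      exact Finset.card_pos.mp (by rw [hArest' j']; norm_num)
  have hpart : ((colorings n s c).filter fun f =>
        ∃ g : Fin (k' + 1) → Fin s, Function.Injective g ∧ ∀ j, ∀ v ∈ A j, f v = g j)
      = Inj.biUnion fun g => (colorings n s c).filter fun f => ∀ j, ∀ v ∈ A j, f v = g j := by
    ext f
    simp only [Finset.mem_filter, Finset.mem_biUnion, hInj, Finset.mem_univ, true_and]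
    constructor
    · rintro ⟨hf, g, hginj, hgf⟩; exact ⟨g, hginj, hf, hgf⟩
    · rintro ⟨g, hginj, hf, hgf⟩; exact ⟨hf, g, hginj, hgf⟩
  have hdisjcl : ∀ g ∈ Inj, ∀ g' ∈ Inj, g ≠ g' →
      Disjoint ((colorings n s c).filter fun f => ∀ j, ∀ v ∈ A j, f v = g j)
        ((colorings n s c).filter fun f => ∀ j, ∀ v ∈ A j, f v = g' j) := by
    intro g _ g' _ hne
    rw [Finset.disjoint_left]
    intro f hf hf'
    refine hne (funext fun j => ?_)
    obtain ⟨v, hv⟩ := hAne j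
    rw [← (Finset.mem_filter.mp hf).2 j v hv, (Finset.mem_filter.mp hf').2 j v hv]
  have hcardE : ((colorings n s c).filter fun f =>
        ∃ g : Fin (k' + 1) → Fin s, Function.Injective g ∧ ∀ j, ∀ v ∈ A j, f v = g j).card
      = ∑ g ∈ Inj, ((colorings n s c).filter fun f => ∀ j, ∀ v ∈ A j, f v = g j).card := by
    rw [hpart, Finset.card_biUnion hdisjcl]
  have hkey : ((colorings n s c).filter fun f =>
        ∃ g : Fin (k' + 1) → Fin s, Function.Injective g ∧ ∀ j, ∀ v ∈ A j, f v = g j).card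
          * n.descFactorial (k' + 2)
      = (colorings n s c).card
          * ∑ g ∈ Inj, (c (g 0)).descFactorial 2 * ∏ j : Fin k', c (g j.succ) := by
    rw [hcardE, Finset.sum_mul, Finset.mul_sum]
    refine Finset.sum_congr rfl fun g hg => ?_
    exact per_g hdisj hA1 hArest' (Finset.mem_filter.mp hg).2
  have hΦne : (colorings n s c).Nonempty := colorings_nonempty hsum
  have hΦpos : (0 : ℝ) < (colorings n s c).card := by
    exact_mod_cast Finset.card_pos.mpr hΦne
  have hInjTup : Inj = injTup (k' + 1) (Finset.univ : Finset (Fin s)) := by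
    ext g
    simp [injTup, hInj]
  have hN : ((∑ g ∈ Inj, (c (g 0)).descFactorial 2 * ∏ j : Fin k', c (g j.succ) : ℕ) : ℝ)
      = (k'.factorial : ℝ) * (((n : ℝ) - ((k' : ℝ) + 1)) * eS x (k' + 1) Finset.univ
          - ((k' : ℝ) + 2) * eS x (k' + 2) Finset.univ) := by
    push_cast
    calc ∑ g ∈ Inj, ((c (g 0)).descFactorial 2 : ℝ) * ∏ j : Fin k', (c (g j.succ) : ℝ)
        = ∑ g ∈ injTup (k' + 1) (Finset.univ : Finset (Fin s)),
            (fun i => ((c i).descFactorial 2 : ℝ)) (g 0) * ∏ j : Fin k', x (g j.succ) := by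
          rw [hInjTup]
      _ = (k'.factorial : ℕ) * ∑ i, ((c i).descFactorial 2 : ℝ) * eS x k' (Finset.univ.erase i) :=
          injTup_weighted x (fun i => ((c i).descFactorial 2 : ℝ)) k'
      _ = (k'.factorial : ℝ) * (((n : ℝ) - ((k' : ℝ) + 1)) * eS x (k' + 1) Finset.univ
            - ((k' : ℝ) + 2) * eS x (k' + 2) Finset.univ) := by
          rw [sum_identity c hsum hpos k']
  have hfact : ((k' + 1 - 1).factorial : ℝ) = (k'.factorial : ℝ) := by norm_num
  have hes1 : (esymmVal s c (k' + 1) : ℝ) = eS x (k' + 1) Finset.univ := esymmVal_cast s c (k' + 1)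
  have hes2 : (esymmVal s c (k' + 1 + 1) : ℝ) = eS x (k' + 2) Finset.univ :=
    esymmVal_cast s c (k' + 2)
  by_cases hn : k' + 2 ≤ n
  · -- main case
    have hDFpos : (0 : ℝ) < (n.descFactorial (k' + 2) : ℝ) := by
      have h0 : 0 < n.descFactorial (k' + 2) := by
        rcases Nat.eq_zero_or_pos (n.descFactorial (k' + 2)) with h | h
        · rw [Nat.descFactorial_eq_zero_iff_lt] at h
          exact absurd h (Nat.not_lt.mpr hn)
        · exact h
      exact_mod_cast h0
    have hkeyR : (((colorings n s c).filter fun f =>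
          ∃ g : Fin (k' + 1) → Fin s, Function.Injective g ∧ ∀ j, ∀ v ∈ A j, f v = g j).card : ℝ)
            * (n.descFactorial (k' + 2) : ℝ)
        = ((colorings n s c).card : ℝ)
            * ((∑ g ∈ Inj, (c (g 0)).descFactorial 2 * ∏ j : Fin k', c (g j.succ) : ℕ) : ℝ) := by
      exact_mod_cast congrArg (fun m : ℕ => (m : ℝ)) hkey
    unfold colProb
    rw [Finset.filter_congr_decidable]
    rw [hfact, hes1, hes2]
    have h22 : ((n.descFactorial (k' + 1 + 1) : ℕ) : ℝ) = (n.descFactorial (k' + 2) : ℝ) := rfl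
    rw [h22, div_mul_eq_mul_div, div_eq_div_iff hΦpos.ne' hDFpos.ne', hkeyR, hN]
    push_cast
    ring
  · -- degenerate case: n < k' + 2, hence n = k' + 1 = s and all c i = 1
    have hDF0 : (n.descFactorial (k' + 1 + 1) : ℝ) = 0 := by
      have : n.descFactorial (k' + 2) = 0 :=
        Nat.descFactorial_eq_zero_iff_lt.mpr (Nat.not_le.mp hn)
      exact_mod_cast this
    rw [hDF0, div_zero, zero_mul]
    have hsn' : s = n :=
      le_antisymm hsn (le_trans (Nat.lt_succ_iff.mp (Nat.not_le.mp hn)) hks)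
    have hc1 : ∀ i, c i = 1 := by
      by_contra hcon
      push_neg at hcon
      obtain ⟨i, hi⟩ := hcon
      have hlt : ∑ i : Fin s, (1 : ℕ) < ∑ i, c i := by
        exact Finset.sum_lt_sum (fun j _ => hpos j)
          ⟨i, Finset.mem_univ i, Nat.lt_of_le_of_ne (hpos i) (Ne.symm hi)⟩
      simp only [Finset.sum_const, Finset.card_univ, Fintype.card_fin, smul_eq_mul, mul_one,
        hsum] at hlt
      rw [hsn'] at hlt
      exact lt_irrefl n hlt
    have hempty : ((colorings n s c).filter fun f =>
        ∃ g : Fin (k' + 1) → Fin s, Function.Injective g ∧ ∀ j, ∀ v ∈ A j, f v = g j) = ∅ := by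
      refine Finset.filter_eq_empty_iff.mpr ?_
      intro f hf
      rintro ⟨g, hginj, hgf⟩
      obtain ⟨a, ha, b, hb, hab⟩ := Finset.one_lt_card.mp (by rw [hA1]; norm_num)
      have hfib : (Finset.univ.filter fun v => f v = g 0).card = c (g 0) := by
        simpa [colorings] using (Finset.mem_filter.mp hf).2 (g 0)
      have h2 : 1 < (Finset.univ.filter fun v => f v = g 0).card := by
        refine Finset.one_lt_card.mpr ⟨a, ?_, b, ?_, hab⟩
        · simp [hgf 0 a ha]
        · simp [hgf 0 b hb]
      rw [hfib, hc1 (g 0)] at h2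
      exact absurd h2 (lt_irrefl 1)
    unfold colProb
    rw [Finset.filter_congr_decidable, hempty]
    simp
end

section
/- Let X be a real random variable on a probability space with 0 ≤ X ≤ u almost surely, for some constant u > 0, and let 0 ≤ θ < 1. Then P( |X − E[X]| > θ·E[ |X − E[X]| ] ) ≥ (1 − θ)² · Var(X) / u². -/
open MeasureTheory

/-- (Bounded-range Paley–Zygmund variant.) If `0 ≤ X ≤ u` a.s. with
`u > 0` and `0 ≤ θ < 1`, then
`P(|X - E[X]| > θ E[|X - E[X]|]) ≥ (1-θ)² Var(X)/u²`. -/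
theorem stmt12 {Ω : Type*} [MeasurableSpace Ω] (μ : Measure Ω) [IsProbabilityMeasure μ]
    (X : Ω → ℝ) (hX : Measurable X)
    (u : ℝ) (hu : 0 < u) (hbound : ∀ᵐ ω ∂μ, 0 ≤ X ω ∧ X ω ≤ u)
    (θ : ℝ) (hθ0 : 0 ≤ θ) (hθ1 : θ < 1) :
    (1 - θ) ^ 2 * ProbabilityTheory.variance X μ / u ^ 2
      ≤ (μ {ω | θ * (∫ ω', |X ω' - ∫ ω'', X ω'' ∂μ| ∂μ)
            < |X ω - ∫ ω'', X ω'' ∂μ|}).toReal := by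
  set m := ∫ ω'', X ω'' ∂μ with hm
  set Y : Ω → ℝ := fun ω => |X ω - m| with hYdef
  have hYmeas : Measurable Y := (hX.sub measurable_const).abs
  have hXmem : MemLp X 2 μ :=
    memLp_of_bounded (hbound.mono fun ω h => ⟨h.1, h.2⟩) hX.aestronglyMeasurable 2
  have hXint : Integrable X μ := hXmem.integrable (by norm_num)
  have hm0 : 0 ≤ m := integral_nonneg_of_ae (hbound.mono fun ω h => h.1)
  have hmu : m ≤ u := by
    have := integral_mono_ae hXint (integrable_const u) (hbound.mono fun ω h => h.2)
    simpa using this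
  have hYb : ∀ᵐ ω ∂μ, Y ω ∈ Set.Icc 0 u := by
    filter_upwards [hbound] with ω h
    exact ⟨abs_nonneg _, abs_le.mpr ⟨by linarith [h.1, h.2], by linarith [h.1, h.2]⟩⟩
  have hYint : Integrable Y μ :=
    (memLp_of_bounded hYb hYmeas.aestronglyMeasurable 1).integrable le_rfl
  set a := ∫ ω', Y ω' ∂μ with ha
  have ha0 : 0 ≤ a := integral_nonneg_of_ae (hYb.mono fun ω h => h.1)
  set A := {ω | θ * a < Y ω} with hA
  have hAmeas : MeasurableSet A := measurableSet_lt measurable_const hYmeas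
  set P := (μ A).toReal with hP
  have hP0 : 0 ≤ P := ENNReal.toReal_nonneg
  -- Var ≤ u * a
  have hVint : Integrable (fun ω => (X ω - m) ^ 2) μ := by
    refine (memLp_of_bounded (a := 0) (b := u ^ 2) ?_ ((hX.sub measurable_const).pow_const 2).aestronglyMeasurable 1).integrable le_rfl
    filter_upwards [hYb] with ω h
    refine ⟨sq_nonneg _, ?_⟩
    have : (X ω - m) ^ 2 = Y ω ^ 2 := (sq_abs _).symm
    change (X ω - m) ^ 2 ≤ u ^ 2
    rw [this]
    nlinarith [h.1, h.2, hu]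
  have hVar : ProbabilityTheory.variance X μ ≤ u * a := by
    rw [ProbabilityTheory.variance_eq_integral hX.aemeasurable]
    change ∫ ω, (X ω - m) ^ 2 ∂μ ≤ u * a
    have h1 : ∫ ω, (X ω - m) ^ 2 ∂μ ≤ ∫ ω, u * Y ω ∂μ := by
      refine integral_mono_ae hVint (hYint.const_mul u) ?_
      filter_upwards [hYb] with ω h
      have : (X ω - m) ^ 2 = Y ω ^ 2 := (sq_abs _).symm
      rw [this]
      nlinarith [h.1, h.2]
    rw [integral_const_mul] at h1
    exact h1
  -- (1-θ) a ≤ u P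
  have hsplit : a = (∫ ω in A, Y ω ∂μ) + ∫ ω in Aᶜ, Y ω ∂μ :=
    (integral_add_compl hAmeas hYint).symm
  have h1 : ∫ ω in A, Y ω ∂μ ≤ u * P := by
    have hle : ∫ ω in A, Y ω ∂μ ≤ ∫ ω in A, (fun _ => u) ω ∂μ :=
      integral_mono_ae hYint.integrableOn (integrable_const u)
        (ae_restrict_of_ae (hYb.mono fun ω h => h.2))
    rw [setIntegral_const, smul_eq_mul, measureReal_def] at hle
    simpa [P, mul_comm] using hle
  have h2 : ∫ ω in Aᶜ, Y ω ∂μ ≤ θ * a := by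
    have hb : ∫ ω in Aᶜ, Y ω ∂μ ≤ ∫ ω in Aᶜ, θ * a ∂μ := by
      refine setIntegral_mono_on hYint.integrableOn (integrable_const _).integrableOn
        hAmeas.compl fun ω hω => ?_
      exact not_lt.1 hω
    rw [setIntegral_const, smul_eq_mul, measureReal_def] at hb
    have hle : (μ Aᶜ).toReal ≤ 1 := by
      have h := (prob_le_one : μ Aᶜ ≤ 1)
      simpa using ENNReal.toReal_mono ENNReal.one_ne_top h
    nlinarith [mul_nonneg hθ0 ha0]
  have hkey : (1 - θ) * a ≤ u * P := by linarith
  have hvar0 : 0 ≤ ProbabilityTheory.variance X μ := ProbabilityTheory.variance_nonneg X μ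
  rw [div_le_iff₀ (by positivity)]
  nlinarith [mul_le_mul_of_nonneg_left hVar (by nlinarith : (0:ℝ) ≤ (1 - θ) ^ 2),
    mul_le_mul_of_nonneg_left hkey (mul_nonneg (by linarith : (0:ℝ) ≤ 1 - θ) hu.le),
    mul_nonneg ha0 hθ0, mul_nonneg (mul_nonneg hθ0 ha0) hu.le]
end

section
/- Let (X_n) and (Y_n) be sequences of real random variables on a common probability space such that 0 ≤ X_n ≤ κ·Y_n almost surely for some constant κ > 0, the expectations E[Y_n] are positive, and Y_n / E[Y_n] → 1 in probability. Then E[X_n]/E[Y_n] → 0 if and only if X_n / Y_n → 0 in probability. -/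
open MeasureTheory Filter


section aux
variable {Ω : Type*} [MeasurableSpace Ω] {μ : Measure Ω} [IsProbabilityMeasure μ]

lemma toReal_mono' {s t : Set Ω} (h : s ⊆ t) : (μ s).toReal ≤ (μ t).toReal :=
  ENNReal.toReal_mono (measure_ne_top μ t) (measure_mono h)

lemma toReal_union_le (s t : Set Ω) :
    (μ (s ∪ t)).toReal ≤ (μ s).toReal + (μ t).toReal := by
  rw [← ENNReal.toReal_add (measure_ne_top μ s) (measure_ne_top μ t)]
  exact ENNReal.toReal_mono (ENNReal.add_ne_top.mpr ⟨measure_ne_top μ s, measure_ne_top μ t⟩)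
    (measure_union_le s t)

lemma markov' {f : Ω → ℝ} (hf : Integrable f μ) (h0 : 0 ≤ᵐ[μ] f) {c : ℝ} (hc : 0 < c) :
    (μ {ω | c ≤ f ω}).toReal ≤ (∫ ω, f ω ∂μ) / c := by
  have := mul_meas_ge_le_integral_of_nonneg h0 hf c
  rw [le_div_iff₀ hc]
  linarith [show c * μ.real {x | c ≤ f x} = (μ {ω | c ≤ f ω}).toReal * c from mul_comm _ _]

lemma integral_le_of_le_one {W : Ω → ℝ} (hWm : Measurable W) (hWint : Integrable W μ)
    (h01 : ∀ᵐ ω ∂μ, 0 ≤ W ω ∧ W ω ≤ 1) {δ : ℝ} (hδ : 0 < δ) :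
    ∫ ω, W ω ∂μ ≤ δ + (μ {ω | δ < W ω}).toReal := by
  have hmeas : MeasurableSet {ω | δ < W ω} := measurableSet_lt measurable_const hWm
  have hb : ∀ᵐ ω ∂μ, W ω ≤ δ + Set.indicator {ω | δ < W ω} (fun _ => (1:ℝ)) ω := by
    filter_upwards [h01] with ω hω
    rw [Set.indicator_apply]
    split_ifs with h
    · linarith [hω.2]
    · simp only [Set.mem_setOf_eq] at h; push_neg at h; linarith
  calc ∫ ω, W ω ∂μ
      ≤ ∫ ω, (δ + Set.indicator {ω | δ < W ω} (fun _ => (1:ℝ)) ω) ∂μ :=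
        integral_mono_ae hWint ((integrable_const δ).add
          ((integrable_const (1:ℝ)).indicator hmeas)) hb
    _ = δ + (μ {ω | δ < W ω}).toReal := by
        rw [integral_add (integrable_const δ) ((integrable_const (1:ℝ)).indicator hmeas),
          integral_const, integral_indicator_const _ hmeas]
        simp
        rfl

end aux


theorem stmt18core {Ω : Type*} [MeasurableSpace Ω] (μ : Measure Ω) [IsProbabilityMeasure μ]
    (X Y : ℕ → Ω → ℝ) (hXm : ∀ n, Measurable (X n)) (hYm : ∀ n, Measurable (Y n))
    (κ : ℝ) (hκ : 0 < κ)
    (hXint : ∀ n, Integrable (X n) μ) (hYint : ∀ n, Integrable (Y n) μ)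
    (hbd : ∀ n, ∀ᵐ ω ∂μ, 0 ≤ X n ω ∧ X n ω ≤ κ * Y n ω)
    (hEY : ∀ n, 0 < ∫ ω, Y n ω ∂μ)
    (hYconc : ∀ ε > (0 : ℝ),
      Tendsto (fun n => (μ {ω | ε < |Y n ω / (∫ ω', Y n ω' ∂μ) - 1|}).toReal)
        atTop (nhds 0)) :
    Tendsto (fun n => (∫ ω, X n ω ∂μ) / (∫ ω, Y n ω ∂μ)) atTop (nhds 0)
      ↔ (∀ ε > (0 : ℝ),
          Tendsto (fun n => (μ {ω | ε < |X n ω / Y n ω|}).toReal) atTop (nhds 0)) := by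
  have hEX : ∀ n, 0 ≤ ∫ ω, X n ω ∂μ := fun n =>
    integral_nonneg_of_ae ((hbd n).mono fun ω hω => hω.1)
  constructor
  · intro h ε hε
    have key : ∀ n, (μ {ω | ε < |X n ω / Y n ω|}).toReal ≤
        (μ {ω | (1:ℝ)/2 < |Y n ω / (∫ ω', Y n ω' ∂μ) - 1|}).toReal
        + (2/ε) * ((∫ ω, X n ω ∂μ) / (∫ ω', Y n ω' ∂μ)) := by
      intro n
      set e := ∫ ω', Y n ω' ∂μ with he
      have hepos : 0 < e := hEY n
      have hN : μ {ω | ¬ (0 ≤ X n ω ∧ X n ω ≤ κ * Y n ω)} = 0 := by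
        simpa [ae_iff] using hbd n
      have hsub : {ω | ε < |X n ω / Y n ω|} ⊆
          ({ω | (1:ℝ)/2 < |Y n ω / e - 1|} ∪ {ω | ε * (e/2) ≤ X n ω}) ∪
            {ω | ¬ (0 ≤ X n ω ∧ X n ω ≤ κ * Y n ω)} := by
        intro ω hω
        by_cases hg : 0 ≤ X n ω ∧ X n ω ≤ κ * Y n ω
        · left
          by_cases hC : (1:ℝ)/2 < |Y n ω / e - 1|
          · exact Or.inl hC
          · right
            push_neg at hC
            have h1 : -(1/2 : ℝ) ≤ Y n ω / e - 1 := (abs_le.mp hC).1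
            have h2 : (1/2 : ℝ) ≤ Y n ω / e := by linarith
            have hY2 : e/2 ≤ Y n ω := by
              have h2' : (1/2 : ℝ) * e ≤ Y n ω := (le_div_iff₀ hepos).mp h2
              linarith
            have hYpos : 0 < Y n ω := by linarith
            have hε' : ε < X n ω / Y n ω := by
              have : X n ω / Y n ω = |X n ω / Y n ω| :=
                (abs_of_nonneg (div_nonneg hg.1 hYpos.le)).symm
              rw [this]; exact hω
            have h3 : ε * Y n ω < X n ω := (lt_div_iff₀ hYpos).mp hε'
            have : ε * (e/2) ≤ ε * Y n ω := by nlinarith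
            exact le_of_lt (lt_of_le_of_lt this h3)
        · right; exact hg
      calc (μ {ω | ε < |X n ω / Y n ω|}).toReal
          ≤ (μ (({ω | (1:ℝ)/2 < |Y n ω / e - 1|} ∪ {ω | ε * (e/2) ≤ X n ω}) ∪
              {ω | ¬ (0 ≤ X n ω ∧ X n ω ≤ κ * Y n ω)})).toReal :=
            ENNReal.toReal_mono (measure_ne_top _ _) (measure_mono hsub)
        _ ≤ (μ ({ω | (1:ℝ)/2 < |Y n ω / e - 1|} ∪ {ω | ε * (e/2) ≤ X n ω})).toReal
              + (μ {ω | ¬ (0 ≤ X n ω ∧ X n ω ≤ κ * Y n ω)}).toReal :=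
            toReal_union_le _ _
        _ ≤ ((μ {ω | (1:ℝ)/2 < |Y n ω / e - 1|}).toReal
              + (μ {ω | ε * (e/2) ≤ X n ω}).toReal) + 0 := by
            rw [hN]; simp [toReal_union_le]
        _ ≤ (μ {ω | (1:ℝ)/2 < |Y n ω / e - 1|}).toReal
              + (2/ε) * ((∫ ω, X n ω ∂μ) / e) := by
            have hm := markov' (μ := μ) (hXint n)
              ((hbd n).mono fun ω hω => hω.1) (c := ε * (e/2)) (by positivity)
            have heq : (∫ ω, X n ω ∂μ) / (ε * (e/2)) = (2/ε) * ((∫ ω, X n ω ∂μ) / e) := by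
              field_simp
            rw [heq] at hm
            linarith
    apply squeeze_zero (fun n => ENNReal.toReal_nonneg) key
    have := (hYconc (1/2) (by norm_num)).add (h.const_mul (2/ε))
    simpa using this
  · intro h
    have hZint : ∀ n, Integrable (fun ω => Y n ω / (∫ ω', Y n ω' ∂μ)) μ := fun n =>
      (hYint n).div_const _
    have hEZ : ∀ n, ∫ ω, Y n ω / (∫ ω', Y n ω' ∂μ) ∂μ = 1 := fun n => by
      rw [integral_div]; exact div_self (hEY n).ne'
    set P : ℕ → Ω → ℝ := fun n ω => max (Y n ω / (∫ ω', Y n ω' ∂μ) - 1) 0 with hP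
    set Nn : ℕ → Ω → ℝ := fun n ω => max (1 - Y n ω / (∫ ω', Y n ω' ∂μ)) 0 with hNn
    have hPint : ∀ n, Integrable (P n) μ := fun n =>
      ((hZint n).sub (integrable_const 1)).pos_part
    have hNint : ∀ n, Integrable (Nn n) μ := fun n =>
      ((integrable_const 1).sub (hZint n)).pos_part
    have hPN : ∀ n, ∫ ω, P n ω ∂μ = ∫ ω, Nn n ω ∂μ := by
      intro n
      have hpt : ∀ ω, P n ω - Nn n ω = Y n ω / (∫ ω', Y n ω' ∂μ) - 1 := by
        intro ω
        simp only [hP, hNn]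
        rcases le_total (Y n ω / (∫ ω', Y n ω' ∂μ)) 1 with h' | h'
        · rw [max_eq_right (by linarith), max_eq_left (by linarith)]; ring
        · rw [max_eq_left (by linarith), max_eq_right (by linarith)]; ring
      have h2 : ∫ ω, (P n ω - Nn n ω) ∂μ = 0 := by
        rw [integral_congr_ae (Filter.Eventually.of_forall hpt),
          integral_sub (hZint n) (integrable_const 1), hEZ n]
        simp
      rw [integral_sub (hPint n) (hNint n)] at h2
      linarith
    have hNlim : Tendsto (fun n => ∫ ω, Nn n ω ∂μ) atTop (nhds 0) := by
      rw [NormedAddCommGroup.tendsto_nhds_zero]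
      intro η hη
      have hb : ∀ n, ∫ ω, Nn n ω ∂μ
          ≤ η/2 + (μ {ω | η/2 < |Y n ω / (∫ ω', Y n ω' ∂μ) - 1|}).toReal := by
        intro n
        have hmN : Measurable (Nn n) :=
          (measurable_const.sub ((hYm n).div_const _)).max measurable_const
        have h01 : ∀ᵐ ω ∂μ, 0 ≤ Nn n ω ∧ Nn n ω ≤ 1 := by
          filter_upwards [hbd n] with ω hω
          have hY0 : 0 ≤ Y n ω := by nlinarith [hω.1, hω.2]
          have hZ0 : 0 ≤ Y n ω / (∫ ω', Y n ω' ∂μ) := div_nonneg hY0 (hEY n).le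
          refine ⟨le_max_right _ _, ?_⟩
          simp only [hNn, max_le_iff]
          constructor <;> linarith
        have step := integral_le_of_le_one hmN (hNint n) h01 (half_pos hη)
        refine step.trans (add_le_add le_rfl ?_)
        apply toReal_mono'
        intro ω hω
        simp only [Set.mem_setOf_eq, hNn] at hω ⊢
        have : η/2 < 1 - Y n ω / (∫ ω', Y n ω' ∂μ) := by
          rcases max_cases (1 - Y n ω / (∫ ω', Y n ω' ∂μ)) 0 with ⟨he1, _⟩ | ⟨he1, _⟩ <;>
            [linarith [hω, he1.symm ▸ hω]; linarith [hω, half_pos hη]]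
        calc η/2 < 1 - Y n ω / (∫ ω', Y n ω' ∂μ) := this
          _ ≤ |Y n ω / (∫ ω', Y n ω' ∂μ) - 1| := by
              rw [abs_sub_comm]; exact le_abs_self _
      have hlim := (hYconc (η/2) (half_pos hη)).eventually_lt_const (show (0:ℝ) < η/2 by linarith)
      filter_upwards [hlim] with n hn
      have h0 : 0 ≤ ∫ ω, Nn n ω ∂μ := integral_nonneg fun ω => le_max_right _ _
      rw [Real.norm_eq_abs, abs_of_nonneg h0]
      calc ∫ ω, Nn n ω ∂μ ≤ η/2 + (μ {ω | η/2 < |Y n ω / (∫ ω', Y n ω' ∂μ) - 1|}).toReal :=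
            hb n
        _ < η/2 + η/2 := by linarith
        _ = η := by ring
    have hPlim : Tendsto (fun n => ∫ ω, P n ω ∂μ) atTop (nhds 0) := by
      simpa only [← hPN] using hNlim
    rw [NormedAddCommGroup.tendsto_nhds_zero]
    intro η hη
    -- key pointwise bound
    have key : ∀ n, (∫ ω, X n ω ∂μ) / (∫ ω', Y n ω' ∂μ)
        ≤ η/2 + κ * (∫ ω, P n ω ∂μ)
          + κ * (μ {ω | (1:ℝ)/2 < |Y n ω / (∫ ω', Y n ω' ∂μ) - 1|}).toReal
          + κ * (μ {ω | η/4 < |X n ω / Y n ω|}).toReal := by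
      intro n
      set e := ∫ ω', Y n ω' ∂μ with he
      have hepos : 0 < e := hEY n
      set C : Set Ω := {ω | (1:ℝ)/2 < |Y n ω / e - 1|} with hC
      set D : Set Ω := {ω | η/4 < |X n ω / Y n ω|} with hD
      have hCm : MeasurableSet C :=
        measurableSet_lt measurable_const (((hYm n).div_const e).sub measurable_const).abs
      have hDm : MeasurableSet D :=
        measurableSet_lt measurable_const ((hXm n).div (hYm n)).abs
      have hae : ∀ᵐ ω ∂μ, X n ω / e
          ≤ η/2 + κ * P n ω + κ * Set.indicator C (fun _ => (1:ℝ)) ω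
            + κ * Set.indicator D (fun _ => (1:ℝ)) ω := by
        filter_upwards [hbd n] with ω hω
        have hY0 : 0 ≤ Y n ω := by nlinarith [hω.1, hω.2]
        have hZ0 : 0 ≤ Y n ω / e := div_nonneg hY0 hepos.le
        have hP0 : 0 ≤ P n ω := le_max_right _ _
        have hPge : Y n ω / e - 1 ≤ P n ω := le_max_left _ _
        have hXe : X n ω / e ≤ κ * (Y n ω / e) := by
          rw [← mul_div_assoc]
          gcongr
          exact hω.2
        have hiD0 : 0 ≤ Set.indicator D (fun _ => (1:ℝ)) ω :=
          Set.indicator_nonneg (fun _ _ => zero_le_one) ω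
        have hiC0 : 0 ≤ Set.indicator C (fun _ => (1:ℝ)) ω :=
          Set.indicator_nonneg (fun _ _ => zero_le_one) ω
        by_cases hc : ω ∈ C
        · rw [Set.indicator_of_mem hc]
          nlinarith
        · by_cases hd : ω ∈ D
          · rw [Set.indicator_of_mem hd]
            nlinarith
          · rw [Set.indicator_of_notMem hc, Set.indicator_of_notMem hd]
            simp only [hC, Set.mem_setOf_eq, not_lt] at hc
            simp only [hD, Set.mem_setOf_eq, not_lt] at hd
            have h1 : -(1/2 : ℝ) ≤ Y n ω / e - 1 := (abs_le.mp hc).1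
            have h2 : Y n ω / e - 1 ≤ 1/2 := (abs_le.mp hc).2
            have hYpos : 0 < Y n ω := by
              have : (1/2 : ℝ) * e ≤ Y n ω := (le_div_iff₀ hepos).mp (by linarith)
              linarith
            have hXY0 : 0 ≤ X n ω / Y n ω := div_nonneg hω.1 hYpos.le
            have hXYle : X n ω / Y n ω ≤ η/4 := by
              have := (abs_of_nonneg hXY0) ▸ hd
              linarith [hd, abs_of_nonneg hXY0]
            have heq : X n ω / e = (X n ω / Y n ω) * (Y n ω / e) := by
              field_simp
            rw [heq]
            nlinarith
      have iP : Integrable (fun ω => κ * P n ω) μ := (hPint n).const_mul κ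
      have iC : Integrable (fun ω => κ * Set.indicator C (fun _ => (1:ℝ)) ω) μ :=
        ((integrable_const (1:ℝ)).indicator hCm).const_mul κ
      have iD : Integrable (fun ω => κ * Set.indicator D (fun _ => (1:ℝ)) ω) μ :=
        ((integrable_const (1:ℝ)).indicator hDm).const_mul κ
      have i1 : Integrable (fun ω => η/2 + κ * P n ω) μ := (integrable_const _).add iP
      have i2 : Integrable (fun ω => η/2 + κ * P n ω
          + κ * Set.indicator C (fun _ => (1:ℝ)) ω) μ := i1.add iC
      have hint : Integrable (fun ω => η/2 + κ * P n ω
          + κ * Set.indicator C (fun _ => (1:ℝ)) ω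
          + κ * Set.indicator D (fun _ => (1:ℝ)) ω) μ := i2.add iD
      calc (∫ ω, X n ω ∂μ) / e = ∫ ω, X n ω / e ∂μ := (integral_div _ _).symm
        _ ≤ ∫ ω, (η/2 + κ * P n ω + κ * Set.indicator C (fun _ => (1:ℝ)) ω
              + κ * Set.indicator D (fun _ => (1:ℝ)) ω) ∂μ :=
            integral_mono_ae ((hXint n).div_const e) hint hae
        _ = η/2 + κ * (∫ ω, P n ω ∂μ) + κ * (μ C).toReal + κ * (μ D).toReal := by
            rw [integral_add i2 iD, integral_add i1 iC,
              integral_add (integrable_const _) iP,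
              integral_const, integral_const_mul, integral_const_mul, integral_const_mul,
              integral_indicator_const _ hCm, integral_indicator_const _ hDm]
            simp [Measure.real]
    -- the upper bound tends to η/2
    have hU : Tendsto (fun n => η/2 + κ * (∫ ω, P n ω ∂μ)
        + κ * (μ {ω | (1:ℝ)/2 < |Y n ω / (∫ ω', Y n ω' ∂μ) - 1|}).toReal
        + κ * (μ {ω | η/4 < |X n ω / Y n ω|}).toReal) atTop (nhds (η/2)) := by
      have := ((tendsto_const_nhds (x := η/2) (f := atTop (α := ℕ))).add
        (hPlim.const_mul κ)).add ((hYconc (1/2) (by norm_num)).const_mul κ) |>.add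
        ((h (η/4) (by linarith)).const_mul κ)
      simpa using this
    have hev := hU.eventually_lt_const (show η/2 < η by linarith)
    filter_upwards [hev] with n hn
    have h0 : 0 ≤ (∫ ω, X n ω ∂μ) / (∫ ω', Y n ω' ∂μ) := div_nonneg (hEX n) (hEY n).le
    rw [Real.norm_eq_abs, abs_of_nonneg h0]
    exact lt_of_le_of_lt (key n) hn

/-- If `0 ≤ X_n ≤ κ Y_n` a.s., `E[Y_n] > 0` and `Y_n/E[Y_n] → 1` in
probability, then `E[X_n]/E[Y_n] → 0` iff `X_n/Y_n → 0` in probability. -/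
theorem stmt18 {Ω : Type*} [MeasurableSpace Ω] (μ : Measure Ω) [IsProbabilityMeasure μ]
    (X Y : ℕ → Ω → ℝ) (κ : ℝ) (hκ : 0 < κ)
    (hXint : ∀ n, Integrable (X n) μ) (hYint : ∀ n, Integrable (Y n) μ)
    (hbd : ∀ n, ∀ᵐ ω ∂μ, 0 ≤ X n ω ∧ X n ω ≤ κ * Y n ω)
    (hEY : ∀ n, 0 < ∫ ω, Y n ω ∂μ)
    (hYconc : ∀ ε > (0 : ℝ),
      Tendsto (fun n => (μ {ω | ε < |Y n ω / (∫ ω', Y n ω' ∂μ) - 1|}).toReal)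
        atTop (nhds 0)) :
    Tendsto (fun n => (∫ ω, X n ω ∂μ) / (∫ ω, Y n ω ∂μ)) atTop (nhds 0)
      ↔ (∀ ε > (0 : ℝ),
          Tendsto (fun n => (μ {ω | ε < |X n ω / Y n ω|}).toReal) atTop (nhds 0)) := by
  classical
  set f : ℕ → Ω → ℝ := fun n => (hXint n).aestronglyMeasurable.mk (X n) with hf
  set g : ℕ → Ω → ℝ := fun n => (hYint n).aestronglyMeasurable.mk (Y n) with hg
  have hfX : ∀ n, X n =ᵐ[μ] f n := fun n => (hXint n).aestronglyMeasurable.ae_eq_mk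
  have hgY : ∀ n, Y n =ᵐ[μ] g n := fun n => (hYint n).aestronglyMeasurable.ae_eq_mk
  have hfm : ∀ n, Measurable (f n) := fun n =>
    (hXint n).aestronglyMeasurable.stronglyMeasurable_mk.measurable
  have hgm : ∀ n, Measurable (g n) := fun n =>
    (hYint n).aestronglyMeasurable.stronglyMeasurable_mk.measurable
  have hfint : ∀ n, Integrable (f n) μ := fun n => (hXint n).congr (hfX n)
  have hgint : ∀ n, Integrable (g n) μ := fun n => (hYint n).congr (hgY n)
  have eX : ∀ n, ∫ ω, X n ω ∂μ = ∫ ω, f n ω ∂μ := fun n => integral_congr_ae (hfX n)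
  have eY : ∀ n, ∫ ω, Y n ω ∂μ = ∫ ω, g n ω ∂μ := fun n => integral_congr_ae (hgY n)
  have hbd' : ∀ n, ∀ᵐ ω ∂μ, 0 ≤ f n ω ∧ f n ω ≤ κ * g n ω := by
    intro n
    filter_upwards [hbd n, hfX n, hgY n] with ω h1 h2 h3
    rw [← h2, ← h3]; exact h1
  have hEY' : ∀ n, 0 < ∫ ω, g n ω ∂μ := fun n => (eY n) ▸ hEY n
  have hsetY : ∀ (ε : ℝ) n,
      μ {ω | ε < |g n ω / (∫ ω', g n ω' ∂μ) - 1|}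
        = μ {ω | ε < |Y n ω / (∫ ω', Y n ω' ∂μ) - 1|} := by
    intro ε n
    apply measure_congr
    filter_upwards [hgY n] with ω hω
    show (ε < |g n ω / (∫ ω', g n ω' ∂μ) - 1|) = (ε < |Y n ω / (∫ ω', Y n ω' ∂μ) - 1|)
    rw [← hω, ← eY n]
  have hsetXY : ∀ (ε : ℝ) n,
      μ {ω | ε < |f n ω / g n ω|} = μ {ω | ε < |X n ω / Y n ω|} := by
    intro ε n
    apply measure_congr
    filter_upwards [hfX n, hgY n] with ω h2 h3
    show (ε < |f n ω / g n ω|) = (ε < |X n ω / Y n ω|)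
    rw [← h2, ← h3]
  have hYconc' : ∀ ε > (0 : ℝ),
      Tendsto (fun n => (μ {ω | ε < |g n ω / (∫ ω', g n ω' ∂μ) - 1|}).toReal)
        atTop (nhds 0) := by
    intro ε hε
    have := hYconc ε hε
    simpa only [hsetY ε] using this
  have main := stmt18core μ f g hfm hgm κ hκ hfint hgint hbd' hEY' hYconc'
  have h1 : (fun n => (∫ ω, X n ω ∂μ) / (∫ ω, Y n ω ∂μ))
      = (fun n => (∫ ω, f n ω ∂μ) / (∫ ω, g n ω ∂μ)) := funext fun n => by rw [eX n, eY n]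
  rw [h1]
  constructor
  · intro hh ε hε
    have := main.mp hh ε hε
    simpa only [hsetXY ε] using this
  · intro hh
    apply main.mpr
    intro ε hε
    have := hh ε hε
    simpa only [← hsetXY ε] using this
end

section
/- Let (X_n) and (Y_n) be sequences of real random variables on a common probability space such that 0 ≤ X_n ≤ κ·Y_n almost surely for some constant κ > 0, E[Y_n] > 0, E[X_n] ≥ τ·E[Y_n] for some constant τ > 0, and Y_n / E[Y_n] → 1 in quadratic mean (L²). If X_n / E[X_n] → 1 in probability, then Var(X_n) / (E[X_n])² → 0; that is, under these hypotheses the second-moment sufficient condition for concentration is also necessary. -/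
open MeasureTheory Filter

private lemma eLp2_eq {Ω : Type*} [MeasurableSpace Ω] {μ : Measure Ω} {f : Ω → ℝ}
    (hf : MemLp f 2 μ) :
    eLpNorm f 2 μ = ENNReal.ofReal ((∫ ω, (f ω) ^ 2 ∂μ) ^ (2⁻¹ : ℝ)) := by
  rw [hf.eLpNorm_eq_integral_rpow_norm two_ne_zero ENNReal.ofNat_ne_top]
  have h2 : ((2 : ENNReal)).toReal = (2 : ℝ) := by norm_num
  rw [h2]
  have h3 : ∫ ω, ‖f ω‖ ^ (2 : ℝ) ∂μ = ∫ ω, (f ω) ^ 2 ∂μ := by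
    refine integral_congr_ae (Filter.Eventually.of_forall fun ω => ?_)
    show ‖f ω‖ ^ (2 : ℝ) = (f ω) ^ 2
    rw [Real.norm_eq_abs, show ((2 : ℝ)) = ((2 : ℕ) : ℝ) by norm_num,
      Real.rpow_natCast, sq_abs]
  rw [h3]

private lemma aux19 {Ω : Type*} [MeasurableSpace Ω] (μ : Measure Ω) [IsProbabilityMeasure μ]
    (Z W : ℕ → Ω → ℝ) (C : ℝ) (hC : 0 < C)
    (hZL2 : ∀ n, MemLp (Z n) 2 μ) (hWL2 : ∀ n, MemLp (W n) 2 μ)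
    (hdom : ∀ n, ∀ᵐ ω ∂μ, ‖Z n ω‖ ≤ C * ‖W n ω‖)
    (hW : Tendsto (fun n => ∫ ω, (W n ω - 1) ^ 2 ∂μ) atTop (nhds 0))
    (hZp : ∀ ε > (0 : ℝ),
      Tendsto (fun n => (μ {ω | ε < |Z n ω - 1|}).toReal) atTop (nhds 0)) :
    Tendsto (fun n => ∫ ω, (Z n ω - 1) ^ 2 ∂μ) atTop (nhds 0) := by
  -- W tends to 1 in L²
  have hWsub : ∀ n, MemLp (W n - fun _ => (1 : ℝ)) 2 μ :=
    fun n => (hWL2 n).sub (memLp_const 1)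
  have hWsnorm : ∀ n, eLpNorm (W n - fun _ => (1 : ℝ)) 2 μ
      = ENNReal.ofReal ((∫ ω, (W n ω - 1) ^ 2 ∂μ) ^ (2⁻¹ : ℝ)) := fun n => by
    simpa using eLp2_eq (hWsub n)
  have hWtend : Tendsto (fun n => eLpNorm (W n - fun _ => (1 : ℝ)) 2 μ) atTop (nhds 0) := by
    have h2 : Tendsto (fun n => (∫ ω, (W n ω - 1) ^ 2 ∂μ) ^ (2⁻¹ : ℝ)) atTop (nhds 0) := by
      have := (Real.continuousAt_rpow_const 0 2⁻¹ (Or.inr (by norm_num))).tendsto.comp hW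
      simpa [Function.comp_def, Real.zero_rpow] using this
    have h3 := (ENNReal.continuous_ofReal.tendsto 0).comp h2
    simp only [ENNReal.ofReal_zero] at h3
    exact h3.congr fun n => (hWsnorm n).symm
  -- tendsto in measure
  have hZim : TendstoInMeasure μ Z atTop (fun _ => (1 : ℝ)) := by
    rw [tendstoInMeasure_iff_dist]
    intro ε hε
    have h1 := hZp (ε / 2) (half_pos hε)
    have h2 : Tendsto (fun n => μ {ω | ε / 2 < |Z n ω - 1|}) atTop (nhds 0) := by
      have := (ENNReal.tendsto_toReal_iff (fun n => measure_ne_top μ _)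
        (x := 0) ENNReal.zero_ne_top).mp (by simpa using h1)
      exact this
    refine tendsto_of_tendsto_of_tendsto_of_le_of_le tendsto_const_nhds h2
      (fun n => bot_le) (fun n => measure_mono ?_)
    intro x hx
    simp only [Set.mem_setOf_eq] at hx ⊢
    rw [Real.dist_eq] at hx
    linarith [half_lt_self hε]
  -- uniform integrability
  have hUIW : UnifIntegrable W 2 μ :=
    unifIntegrable_of_tendsto_Lp one_le_two ENNReal.ofNat_ne_top hWL2 (memLp_const 1) hWtend
  have hUIZ : UnifIntegrable Z 2 μ := by
    intro ε hε
    obtain ⟨δ, hδ, hδ'⟩ := hUIW (div_pos hε hC)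
    refine ⟨δ, hδ, fun i s hs hμs => ?_⟩
    have hb : ∀ᵐ x ∂μ, ‖s.indicator (Z i) x‖ ≤ ‖(fun x => C * s.indicator (W i) x) x‖ := by
      filter_upwards [hdom i] with x hx
      by_cases hxs : x ∈ s
      · simp only [Set.indicator_of_mem hxs]
        calc ‖Z i x‖ ≤ C * ‖W i x‖ := hx
          _ = ‖C * W i x‖ := by
              rw [norm_mul, Real.norm_eq_abs C, abs_of_pos hC]
      · simp [Set.indicator_of_notMem hxs]
    calc eLpNorm (s.indicator (Z i)) 2 μ
        ≤ eLpNorm (fun x => C * s.indicator (W i) x) 2 μ := eLpNorm_mono_ae hb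
      _ = ‖C‖ₑ * eLpNorm (s.indicator (W i)) 2 μ := by
          exact eLpNorm_const_smul (μ := μ) C (s.indicator (W i)) 2
      _ ≤ ‖C‖ₑ * ENNReal.ofReal (ε / C) := by
          gcongr
          exact hδ' i s hs hμs
      _ = ENNReal.ofReal ε := by
          rw [Real.enorm_eq_ofReal hC.le, ← ENNReal.ofReal_mul hC.le, mul_comm,
            div_mul_cancel₀ _ hC.ne']
  -- Vitali
  have hZtend := tendsto_Lp_finite_of_tendstoInMeasure one_le_two ENNReal.ofNat_ne_top
      (fun n => (hZL2 n).aestronglyMeasurable) (memLp_const 1) hUIZ hZim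
  -- convert back to integrals
  have hbnn : ∀ n, 0 ≤ ∫ ω, (Z n ω - 1) ^ 2 ∂μ := fun n =>
    integral_nonneg fun ω => sq_nonneg _
  have heq : ∀ n, eLpNorm (Z n - fun _ => (1 : ℝ)) 2 μ
      = ENNReal.ofReal ((∫ ω, (Z n ω - 1) ^ 2 ∂μ) ^ (2⁻¹ : ℝ)) := fun n => by
    simpa using eLp2_eq ((hZL2 n).sub (memLp_const 1))
  have h1 : Tendsto (fun n => (∫ ω, (Z n ω - 1) ^ 2 ∂μ) ^ (2⁻¹ : ℝ)) atTop (nhds 0) := by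
    have h := (ENNReal.tendsto_toReal ENNReal.zero_ne_top).comp hZtend
    simp only [ENNReal.toReal_zero] at h
    refine h.congr fun n => ?_
    show (eLpNorm (Z n - fun _ => (1 : ℝ)) 2 μ).toReal = _
    rw [heq n, ENNReal.toReal_ofReal (Real.rpow_nonneg (hbnn n) _)]
  have h2 := h1.pow 2
  simp only [ne_eq, OfNat.ofNat_ne_zero, not_false_eq_true, zero_pow] at h2
  refine h2.congr fun n => ?_
  rw [← Real.rpow_natCast ((∫ ω, (Z n ω - 1) ^ 2 ∂μ) ^ (2⁻¹ : ℝ)) 2,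
    ← Real.rpow_mul (hbnn n)]
  norm_num

/-- If `0 ≤ X_n ≤ κ Y_n` a.s., `E[Y_n] > 0`, `E[X_n] ≥ τ E[Y_n]` with
`τ > 0`, and `Y_n/E[Y_n] → 1` in quadratic mean, then `X_n/E[X_n] → 1` in probability
implies `Var(X_n)/E[X_n]² → 0`. -/
theorem stmt19 {Ω : Type*} [MeasurableSpace Ω] (μ : Measure Ω) [IsProbabilityMeasure μ]
    (X Y : ℕ → Ω → ℝ) (κ : ℝ) (hκ : 0 < κ)
    (hXL2 : ∀ n, MemLp (X n) 2 μ) (hYL2 : ∀ n, MemLp (Y n) 2 μ)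
    (hbd : ∀ n, ∀ᵐ ω ∂μ, 0 ≤ X n ω ∧ X n ω ≤ κ * Y n ω)
    (hEY : ∀ n, 0 < ∫ ω, Y n ω ∂μ)
    (τ : ℝ) (hτ : 0 < τ)
    (hEX : ∀ n, τ * (∫ ω, Y n ω ∂μ) ≤ ∫ ω, X n ω ∂μ)
    (hYqm : Tendsto (fun n => ∫ ω, (Y n ω / (∫ ω', Y n ω' ∂μ) - 1) ^ 2 ∂μ)
        atTop (nhds 0))
    (hXconc : ∀ ε > (0 : ℝ),
      Tendsto (fun n => (μ {ω | ε < |X n ω / (∫ ω', X n ω' ∂μ) - 1|}).toReal)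
        atTop (nhds 0)) :
    Tendsto (fun n => ProbabilityTheory.variance (X n) μ / (∫ ω, X n ω ∂μ) ^ 2)
      atTop (nhds 0) := by
  have hmpos : ∀ n, 0 < ∫ ω, X n ω ∂μ := fun n =>
    lt_of_lt_of_le (mul_pos hτ (hEY n)) (hEX n)
  set Z : ℕ → Ω → ℝ := fun n ω => X n ω / (∫ ω', X n ω' ∂μ) with hZdef
  set W : ℕ → Ω → ℝ := fun n ω => Y n ω / (∫ ω', Y n ω' ∂μ) with hWdef
  have hZL2 : ∀ n, MemLp (Z n) 2 μ := fun n => by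
    simpa [hZdef, div_eq_inv_mul] using (hXL2 n).const_mul (∫ ω', X n ω' ∂μ)⁻¹
  have hWL2 : ∀ n, MemLp (W n) 2 μ := fun n => by
    simpa [hWdef, div_eq_inv_mul] using (hYL2 n).const_mul (∫ ω', Y n ω' ∂μ)⁻¹
  have hdom : ∀ n, ∀ᵐ ω ∂μ, ‖Z n ω‖ ≤ (κ / τ) * ‖W n ω‖ := by
    intro n
    filter_upwards [hbd n] with ω hω
    obtain ⟨h0, h1⟩ := hω
    have hY0 : 0 ≤ Y n ω := by nlinarith
    have hZ0 : 0 ≤ Z n ω := div_nonneg h0 (hmpos n).le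
    have hW0 : 0 ≤ W n ω := div_nonneg hY0 (hEY n).le
    rw [Real.norm_eq_abs, Real.norm_eq_abs, abs_of_nonneg hZ0, abs_of_nonneg hW0]
    rw [hZdef, hWdef]
    simp only
    rw [div_mul_div_comm]
    have hτe : 0 < τ * ∫ ω', Y n ω' ∂μ := mul_pos hτ (hEY n)
    calc X n ω / (∫ ω', X n ω' ∂μ) ≤ (κ * Y n ω) / (∫ ω', X n ω' ∂μ) :=
          (div_le_div_iff_of_pos_right (hmpos n)).mpr h1
      _ ≤ (κ * Y n ω) / (τ * ∫ ω', Y n ω' ∂μ) :=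
          div_le_div_of_nonneg_left (mul_nonneg hκ.le hY0) hτe (hEX n)
  have key := aux19 μ Z W (κ / τ) (div_pos hκ hτ) hZL2 hWL2 hdom hYqm hXconc
  refine key.congr fun n => ?_
  have hm := hmpos n
  have hint : ∀ ω, (Z n ω - 1) ^ 2 = (X n ω - ∫ ω', X n ω' ∂μ) ^ 2 / (∫ ω', X n ω' ∂μ) ^ 2 :=
    fun ω => by
      simp only [hZdef]
      rw [← div_pow]
      congr 1
      field_simp
  calc ∫ ω, (Z n ω - 1) ^ 2 ∂μ
      = ∫ ω, (X n ω - ∫ ω', X n ω' ∂μ) ^ 2 / (∫ ω', X n ω' ∂μ) ^ 2 ∂μ := by simp_rw [hint]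
    _ = (∫ ω, (X n ω - ∫ ω', X n ω' ∂μ) ^ 2 ∂μ) / (∫ ω', X n ω' ∂μ) ^ 2 := integral_div _ _
    _ = ProbabilityTheory.variance (X n) μ / (∫ ω, X n ω ∂μ) ^ 2 := by
        rw [ProbabilityTheory.variance_eq_integral (hXL2 n).aestronglyMeasurable.aemeasurable]
end
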